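/- Let L be a subspace of E^p which is isotropic, and set S := pr_T(L). If S ≠ T and dim S > dim T − p (equivalently, ⋀^p S° = {0}), then pr_T(L^⊥) is not contained in S; in particular L is strictly contained in L^⊥ and L is not Lagrangian. -/

import Mathlib

open Module

/-- `E^p` for `p = q+1`: the vector space `T ⊕ ⋀^{q+1} T*`. -/
abbrev EP (T : Type) [AddCommGroup T] [Module ℝ T] (q : ℕ) :=
  T × (T [⋀^Fin (q+1)]→ₗ[ℝ] ℝ)

variable {T : Type} [AddCommGroup T] [Module ℝ T]

/-- The `⋀^q T*`-valued pairing on `E^{q+1}`: `⟨(X,α),(Y,β)⟩ = ι_X β + ι_Y α`. -/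
noncomputable def pairing {q : ℕ} (e₁ e₂ : EP T q) : T [⋀^Fin q]→ₗ[ℝ] ℝ :=
  e₂.2.curryLeft e₁.1 + e₁.2.curryLeft e₂.1

def orthSet {q : ℕ} (L : Set (EP T q)) : Set (EP T q) :=
  {e | ∀ l ∈ L, pairing e l = 0}

def IsIsotropic {q : ℕ} (L : Set (EP T q)) : Prop :=
  ∀ e₁ ∈ L, ∀ e₂ ∈ L, pairing e₁ e₂ = 0

set_option synthInstance.maxHeartbeats 1000000
set_option maxHeartbeats 1000000
set_option linter.unusedSectionVars false

section AuxLemmas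

variable {T : Type} [AddCommGroup T] [Module ℝ T]


abbrev AF (T : Type) [AddCommGroup T] [Module ℝ T] (m : ℕ) : Type :=
  T [⋀^Fin m]→ₗ[ℝ] ℝ

noncomputable def wedgeFun (y : T →ₗ[ℝ] ℝ) (m : ℕ) (β : AF T m) : AF T (m+1) :=
  ((ExteriorAlgebra.liftAlternating (Pi.single m β) ∘ₗ
      CliffordAlgebra.contractLeft (Q := (0 : QuadraticForm ℝ T)) y)).compAlternatingMap
    (ExteriorAlgebra.ιMulti ℝ (m+1))

theorem wedgeFun_apply (y : T →ₗ[ℝ] ℝ) (m : ℕ) (β : AF T m) (v : Fin (m+1) → T) :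
    wedgeFun y m β v =
      ExteriorAlgebra.liftAlternating (Pi.single m β)
        (CliffordAlgebra.contractLeft (Q := (0 : QuadraticForm ℝ T)) y
          (ExteriorAlgebra.ιMulti ℝ (m+1) v)) := rfl

noncomputable def wedgeL (y : T →ₗ[ℝ] ℝ) (m : ℕ) : AF T m →ₗ[ℝ] AF T (m+1) where
  toFun := wedgeFun y m
  map_add' β γ := by
    ext v
    simp [wedgeFun_apply, Pi.single_add]
  map_smul' c β := by
    ext v
    simp [wedgeFun_apply, Pi.single_smul]

theorem single_succ_curry (m : ℕ) (β : AF T (m+1)) (v : T) :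
    (fun i => ((Pi.single (M := fun i => AF T i) (m+1) β) (i+1)).curryLeft v) =
      Pi.single (M := fun i => AF T i) m (β.curryLeft v) := by
  funext i
  rcases eq_or_ne i m with rfl | h
  · simp
  · rw [Pi.single_eq_of_ne (by omega), Pi.single_eq_of_ne h]
    simp

theorem wedgeL_curry (y : T →ₗ[ℝ] ℝ) (m : ℕ) (β : AF T (m+1)) (v : T) :
    (wedgeL y (m+1) β).curryLeft v = y v • β - wedgeL y m (β.curryLeft v) := by
  ext w
  have h1 : ExteriorAlgebra.ιMulti ℝ (m+2) (Matrix.vecCons v w) =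
      ExteriorAlgebra.ι ℝ v * ExteriorAlgebra.ιMulti ℝ (m+1) w := by
    rw [ExteriorAlgebra.ιMulti_succ_apply, Matrix.cons_val_zero, Matrix.tail_cons]
  rw [AlternatingMap.curryLeft_apply_apply]
  show wedgeFun y (m+1) β (Matrix.vecCons v w) = _
  rw [wedgeFun_apply, h1, CliffordAlgebra.contractLeft_ι_mul, map_sub, map_smul,
    ExteriorAlgebra.liftAlternating_apply_ιMulti, Pi.single_eq_same,
    ExteriorAlgebra.liftAlternating_ι_mul]
  have h2 := single_succ_curry (T := T) m β v
  simp only [Nat.succ_eq_add_one]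
  rw [h2]
  have h3 : (wedgeL y m (β.curryLeft v)) w =
      ExteriorAlgebra.liftAlternating (Pi.single m (β.curryLeft v))
        (CliffordAlgebra.contractLeft (Q := (0 : QuadraticForm ℝ T)) y
          (ExteriorAlgebra.ιMulti ℝ (m+1) w)) := rfl
  simp [h3]



theorem wedgeL_curry₀ (y : T →ₗ[ℝ] ℝ) (β : AF T 0) (v : T) :
    (wedgeL y 0 β).curryLeft v = y v • β := by
  ext w
  rw [AlternatingMap.curryLeft_apply_apply]
  show wedgeFun y 0 β (Matrix.vecCons v w) = _
  rw [wedgeFun_apply]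
  have h1 : ExteriorAlgebra.ιMulti ℝ 1 (Matrix.vecCons v w) = ExteriorAlgebra.ι ℝ v * 1 := by
    rw [ExteriorAlgebra.ιMulti_succ_apply, Matrix.cons_val_zero, ExteriorAlgebra.ιMulti_zero_apply]
  rw [h1, CliffordAlgebra.contractLeft_ι_mul, CliffordAlgebra.contractLeft_one, mul_zero,
    sub_zero, map_smul, ExteriorAlgebra.liftAlternating_one, Pi.single_eq_same]
  simp only [AlternatingMap.smul_apply, smul_eq_mul]
  congr 1
  exact congrArg β (Subsingleton.elim _ _)

theorem curry_anticomm {m : ℕ} (β : AF T (m+2)) (a b : T) :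
    (β.curryLeft a).curryLeft b = - (β.curryLeft b).curryLeft a := by
  have h := AlternatingMap.curryLeft_same β (a + b)
  rw [map_add] at h
  simp only [AlternatingMap.curryLeft_add, map_add] at h
  simp only [LinearMap.add_apply, AlternatingMap.curryLeft_same] at h
  rw [eq_neg_iff_add_eq_zero]
  linear_combination (norm := abel) h

noncomputable instance (m : ℕ) [FiniteDimensional ℝ T] : FiniteDimensional ℝ (AF T m) := by
  have : Function.Injective
      (⟨⟨fun f => f.toMultilinearMap, fun _ _ => rfl⟩, fun _ _ => rfl⟩ :
        AF T m →ₗ[ℝ] MultilinearMap ℝ (fun _ : Fin m => T) ℝ) :=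
    AlternatingMap.coe_multilinearMap_injective
  exact FiniteDimensional.of_injective _ this



theorem AFsum_apply {m : ℕ} {α : Type*} (s : Finset α) (f : α → AF T m) (w : Fin m → T) :
    (∑ a ∈ s, f a) w = ∑ a ∈ s, f a w := by
  induction s using Finset.cons_induction with
  | empty => simp
  | cons a s ha ih => rw [Finset.sum_cons, Finset.sum_cons, AlternatingMap.add_apply, ih]

theorem Sdeg0 [FiniteDimensional ℝ T] (q : ℕ) (S : Submodule ℝ T)
    (hcard : finrank ℝ T < finrank ℝ S + (q+1)) (β : AF T (q+1))
    (hβ : ∀ Y ∈ S, β.curryLeft Y = 0) : β = 0 := by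
  classical
  ext v
  show β v = 0
  by_cases hv : LinearIndependent ℝ v
  · set V : Submodule ℝ T := Submodule.span ℝ (Set.range v) with hV
    have hVrank : finrank ℝ V = q + 1 := by
      rw [hV, finrank_span_eq_card hv, Fintype.card_fin]
    have hpos : 0 < finrank ℝ (S ⊓ V : Submodule ℝ T) := by
      have h1 := Submodule.finrank_sup_add_finrank_inf_eq S V
      have h2 : finrank ℝ (S ⊔ V : Submodule ℝ T) ≤ finrank ℝ T := Submodule.finrank_le _
      omega
    have hne : (S ⊓ V : Submodule ℝ T) ≠ ⊥ := by
      intro h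
      rw [h] at hpos
      simp at hpos
    obtain ⟨Y, hYmem, hY0⟩ := Submodule.exists_mem_ne_zero_of_ne_bot hne
    obtain ⟨c, hc⟩ := Submodule.mem_span_range_iff_exists_fun ℝ |>.mp hYmem.2
    have hck : ∃ k, c k ≠ 0 := by
      by_contra h
      push_neg at h
      apply hY0
      rw [← hc]
      simp [h]
    obtain ⟨k, hk⟩ := hck
    set w : Fin q → T := v ∘ k.succAbove with hw
    have h2 : (β.curryLeft Y) w = 0 := by rw [hβ Y hYmem.1]; rfl
    have h3 : ∀ i, i ≠ k → β (Matrix.vecCons (v i) w) = 0 := by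
      intro i hik
      obtain ⟨j, hj⟩ := Fin.exists_succAbove_eq hik
      refine AlternatingMap.map_eq_zero_of_eq β _ (i := 0) (j := j.succ) ?_
        (Fin.succ_ne_zero j).symm
      rw [Matrix.cons_val_zero, Matrix.cons_val_succ]
      rw [hw]
      show v i = v (k.succAbove j)
      rw [hj]
    have h4 : β (Matrix.vecCons (v k) w) = 0 := by
      have h5 : β.curryLeft Y = ∑ i, c i • β.curryLeft (v i) := by
        rw [← hc, map_sum]
        simp
      rw [h5] at h2
      rw [AFsum_apply] at h2
      simp only [AlternatingMap.smul_apply,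
        AlternatingMap.curryLeft_apply_apply, smul_eq_mul] at h2
      rw [Finset.sum_eq_single k] at h2
      · rcases mul_eq_zero.mp h2 with h | h
        · exact absurd h hk
        · exact h
      · intro i _ hik
        rw [h3 i hik, mul_zero]
      · intro h
        exact absurd (Finset.mem_univ k) h
    have h6 : Matrix.vecCons (v k) w = v ∘ (Fin.cycleRange k).symm := by
      funext i
      induction i using Fin.cases with
      | zero => rw [Matrix.cons_val_zero]; show v k = v _; rw [Fin.cycleRange_symm_zero]
      | succ j =>
        rw [Matrix.cons_val_succ]
        show v (k.succAbove j) = v _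
        rw [Fin.cycleRange_symm_succ]
    have h7 := β.map_perm v ((Fin.cycleRange k).symm : Equiv.Perm (Fin (q+1)))
    rw [← h6, h4] at h7
    rcases Int.units_eq_one_or (Equiv.Perm.sign ((Fin.cycleRange k).symm : Equiv.Perm (Fin (q+1)))) with hs | hs <;>
      rw [hs] at h7
    · rw [one_smul] at h7; exact h7.symm
    · rw [Units.neg_smul, one_smul] at h7
      exact neg_eq_zero.mp h7.symm
  · exact β.map_linearDependent v hv

variable {J : Type} [Fintype J] [DecidableEq J]

noncomputable def Kop (Y : J → T) (y : J → (T →ₗ[ℝ] ℝ)) : (m : ℕ) → (AF T m →ₗ[ℝ] AF T m)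
  | 0 => 0
  | (m+1) => ∑ j : J, (wedgeL (y j) m) ∘ₗ ((AlternatingMap.curryLeftLinearMap (R := ℝ)).flip (Y j))

theorem Kop_succ_apply (Y : J → T) (y : J → (T →ₗ[ℝ] ℝ)) (m : ℕ) (β : AF T (m+1)) :
    Kop Y y (m+1) β = ∑ j : J, wedgeL (y j) m (β.curryLeft (Y j)) := by
  simp [Kop]

theorem curry_sum {m : ℕ} (f : J → AF T (m+1)) (v : T) :
    (∑ j : J, f j).curryLeft v = ∑ j : J, (f j).curryLeft v := by
  have := map_sum (AlternatingMap.curryLeftLinearMap (R := ℝ) (M := T) (N := ℝ) (n := m))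
    f Finset.univ
  exact congrFun (congrArg _ this) v |>.trans (by simp)

theorem Kop_comm (Y : J → T) (y : J → (T →ₗ[ℝ] ℝ))
    (hdual : ∀ j k, y j (Y k) = if k = j then 1 else 0)
    (m : ℕ) (β : AF T (m+1)) (k : J) :
    (Kop Y y (m+1) β).curryLeft (Y k) =
      β.curryLeft (Y k) + Kop Y y m (β.curryLeft (Y k)) := by
  rw [Kop_succ_apply, curry_sum]
  cases m with
  | zero =>
    simp [wedgeL_curry₀, hdual, Kop, ite_smul]
  | succ m =>
    simp only [wedgeL_curry]
    rw [Finset.sum_sub_distrib]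
    have h1 : ∑ j : J, y j (Y k) • β.curryLeft (Y j) = β.curryLeft (Y k) := by
      simp [hdual, ite_smul]
    rw [h1, Kop_succ_apply, sub_eq_add_neg, ← Finset.sum_neg_distrib]
    congr 1
    refine Finset.sum_congr rfl fun j _ => ?_
    rw [curry_anticomm β (Y j) (Y k), map_neg, neg_neg]

theorem Kop_inj (Y : J → T) (y : J → (T →ₗ[ℝ] ℝ))
    (hdual : ∀ j k, y j (Y k) = if k = j then 1 else 0) :
    ∀ (m : ℕ) (c : ℝ), 1 ≤ c → ∀ β : AF T m, c • β + Kop Y y m β = 0 → β = 0 := by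
  intro m
  induction m with
  | zero =>
    intro c hc β h0
    simp only [Kop, LinearMap.zero_apply, add_zero] at h0
    have : c ≠ 0 := by linarith
    exact (smul_eq_zero.mp h0).resolve_left this
  | succ m ih =>
    intro c hc β h0
    have hck : ∀ k, β.curryLeft (Y k) = 0 := by
      intro k
      refine ih (c+1) (by linarith) _ ?_
      have h1 := congrArg (fun γ : AF T (m+1) => γ.curryLeft (Y k)) h0
      simp only [AlternatingMap.curryLeft_add, AlternatingMap.curryLeft_smul,
        LinearMap.add_apply, LinearMap.smul_apply, AlternatingMap.curryLeft_zero,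
        LinearMap.zero_apply] at h1
      rw [Kop_comm Y y hdual m β k] at h1
      rw [add_smul, one_smul]
      calc c • β.curryLeft (Y k) + β.curryLeft (Y k) + Kop Y y m (β.curryLeft (Y k))
          = c • β.curryLeft (Y k) +
            (β.curryLeft (Y k) + Kop Y y m (β.curryLeft (Y k))) := by abel
        _ = 0 := h1
    have hK : Kop Y y (m+1) β = 0 := by
      rw [Kop_succ_apply]
      simp [hck]
    rw [hK, add_zero] at h0
    have : c ≠ 0 := by linarith
    exact (smul_eq_zero.mp h0).resolve_left this


theorem Kop_solve [FiniteDimensional ℝ T] (Y : J → T) (y : J → (T →ₗ[ℝ] ℝ))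
    (hdual : ∀ j k, y j (Y k) = if k = j then 1 else 0)
    (m : ℕ) (g : AF T m) : ∃ h : AF T m, h + Kop Y y m h = g := by
  set f : AF T m →ₗ[ℝ] AF T m := LinearMap.id + Kop Y y m with hf
  have hinj : Function.Injective f := by
    rw [← LinearMap.ker_eq_bot, eq_bot_iff]
    intro β hβ
    simp only [LinearMap.mem_ker, hf, LinearMap.add_apply, LinearMap.id_apply] at hβ
    have := Kop_inj Y y hdual m 1 le_rfl β (by rw [one_smul]; exact hβ)
    simp [this]
  obtain ⟨h, hh⟩ := LinearMap.injective_iff_surjective.mp hinj g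
  exact ⟨h, by simpa [hf] using hh⟩




theorem curry_add {m : ℕ} (γ δ : AF T (m+1)) (v : T) :
    (γ + δ).curryLeft v = γ.curryLeft v + δ.curryLeft v := by
  rw [AlternatingMap.curryLeft_add]; rfl

theorem curry_neg {m : ℕ} (γ : AF T (m+1)) (v : T) :
    (-γ).curryLeft v = -(γ.curryLeft v) := by
  have h := map_neg (AlternatingMap.curryLeftLinearMap (R := ℝ) (M := T) (N := ℝ) (n := m)) γ
  have := DFunLike.congr_fun h v
  simpa using this

theorem curry_smulv {m : ℕ} (c : ℝ) (γ : AF T (m+1)) (v : T) :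
    (c • γ).curryLeft v = c • (γ.curryLeft v) := by
  rw [AlternatingMap.curryLeft_smul]; rfl

theorem construct [FiniteDimensional ℝ T] {J : Type} [Fintype J] [DecidableEq J]
    (Y : J → T) (y : J → (T →ₗ[ℝ] ℝ))
    (hdual : ∀ j k, y j (Y k) = if k = j then 1 else 0)
    (m : ℕ) (X : T) (β : J → AF T (m+1))
    (hβ : ∀ j k, (β j).curryLeft (Y k) + (β k).curryLeft (Y j) = 0) :
    ∃ α : AF T (m+1), ∀ k, α.curryLeft (Y k) = -((β k).curryLeft X) := by
  classical
  set g : J → AF T m := fun j => -((β j).curryLeft X) with hgdef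
  have hsolve : ∀ j, ∃ h, h + Kop Y y m h = g j := fun j => Kop_solve Y y hdual m (g j)
  choose h hh using hsolve
  cases m with
  | zero =>
    refine ⟨∑ j, wedgeL (y j) 0 (h j), fun k => ?_⟩
    rw [curry_sum]
    simp only [wedgeL_curry₀, hdual, ite_smul, one_smul, zero_smul]
    rw [Finset.sum_ite_eq, if_pos (Finset.mem_univ k)]
    have h0 := hh k
    simp only [Kop, LinearMap.zero_apply, add_zero] at h0
    exact h0
  | succ m =>
    have hgas : ∀ j k, (g j).curryLeft (Y k) + (g k).curryLeft (Y j) = 0 := by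
      intro j k
      have e1 : ∀ a b : J, (g a).curryLeft (Y b) = ((β a).curryLeft (Y b)).curryLeft X := by
        intro a b
        rw [hgdef]
        simp only
        rw [curry_neg, curry_anticomm (β a) X (Y b), neg_neg]
      rw [e1 j k, e1 k j, ← curry_add, hβ j k]
      simp
    have hhas : ∀ j k, (h j).curryLeft (Y k) + (h k).curryLeft (Y j) = 0 := by
      intro j k
      refine Kop_inj Y y hdual m 2 (by norm_num) _ ?_
      have e2 : ∀ a b : J, (g a).curryLeft (Y b) =
          (2:ℝ) • (h a).curryLeft (Y b) + Kop Y y m ((h a).curryLeft (Y b)) := by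
        intro a b
        conv_lhs => rw [← hh a]
        rw [curry_add, Kop_comm Y y hdual m (h a) b, two_smul]
        abel
      have h3 := hgas j k
      rw [e2 j k, e2 k j] at h3
      rw [smul_add, map_add]
      calc (2:ℝ) • (h j).curryLeft (Y k) + (2:ℝ) • (h k).curryLeft (Y j) +
            (Kop Y y m ((h j).curryLeft (Y k)) + Kop Y y m ((h k).curryLeft (Y j)))
          = (2:ℝ) • (h j).curryLeft (Y k) + Kop Y y m ((h j).curryLeft (Y k)) +
            ((2:ℝ) • (h k).curryLeft (Y j) + Kop Y y m ((h k).curryLeft (Y j))) := by abel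
        _ = 0 := h3
    refine ⟨∑ j, wedgeL (y j) (m+1) (h j), fun k => ?_⟩
    rw [curry_sum]
    simp only [wedgeL_curry]
    rw [Finset.sum_sub_distrib]
    have h4 : ∑ j : J, y j (Y k) • h j = h k := by
      simp only [hdual, ite_smul, one_smul, zero_smul]
      rw [Finset.sum_ite_eq, if_pos (Finset.mem_univ k)]
    have h5 : ∀ j : J, (h j).curryLeft (Y k) = -((h k).curryLeft (Y j)) := by
      intro j
      exact eq_neg_of_add_eq_zero_left (hhas j k)
    rw [h4]
    have h6 : ∑ j : J, wedgeL (y j) m ((h j).curryLeft (Y k)) =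
        -(Kop Y y (m+1) ((h k))) := by
      rw [Kop_succ_apply, ← Finset.sum_neg_distrib]
      refine Finset.sum_congr rfl fun j _ => ?_
      rw [h5 j, map_neg]
    rw [h6, sub_neg_eq_add, hh k]

end AuxLemmas

theorem stmt1 [FiniteDimensional ℝ T] (q : ℕ) (hq : q + 1 ≤ finrank ℝ T)
    (L : Submodule ℝ (EP T q))
    (hiso : IsIsotropic (L : Set (EP T q)))
    (hne : L.map (LinearMap.fst ℝ T (T [⋀^Fin (q+1)]→ₗ[ℝ] ℝ)) ≠ ⊤)
    (hdim : finrank ℝ T - (q+1) <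
      finrank ℝ (L.map (LinearMap.fst ℝ T (T [⋀^Fin (q+1)]→ₗ[ℝ] ℝ)))) :
    (¬ ∀ e ∈ orthSet (L : Set (EP T q)),
        e.1 ∈ L.map (LinearMap.fst ℝ T (T [⋀^Fin (q+1)]→ₗ[ℝ] ℝ))) ∧
    (L : Set (EP T q)) ⊂ orthSet (L : Set (EP T q)) ∧
    (L : Set (EP T q)) ≠ orthSet (L : Set (EP T q)) := by
  classical
  set S : Submodule ℝ T := L.map (LinearMap.fst ℝ T (T [⋀^Fin (q+1)]→ₗ[ℝ] ℝ)) with hSdef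
  have hcard : finrank ℝ T < finrank ℝ S + (q+1) := by omega
  -- X outside S
  obtain ⟨X, hX⟩ : ∃ X : T, X ∉ S := by
    by_contra hcon
    push_neg at hcon
    exact hne (Submodule.eq_top_iff'.mpr hcon)
  -- kernel triviality
  have hker : ∀ β : AF T (q+1), ((0:T), β) ∈ L → β = 0 := by
    intro β hβL
    refine Sdeg0 q S hcard β ?_
    intro Y hY
    obtain ⟨l, hl, rfl⟩ := Submodule.mem_map.mp hY
    have h0 := hiso ((0:T), β) hβL l hl
    have : pairing ((0:T), β) l = β.curryLeft l.1 := by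
      simp [pairing]
    rw [this] at h0
    exact h0
  -- basis of S
  set b : Basis (Fin (finrank ℝ S)) ℝ S := finBasis ℝ S with hb
  set Yv : Fin (finrank ℝ S) → T := fun j => (b j : T) with hYv
  have hYvS : ∀ j, Yv j ∈ S := fun j => (b j).2
  -- lifts
  have hlift : ∀ j, ∃ lj : EP T q, lj ∈ L ∧ lj.1 = Yv j := by
    intro j
    obtain ⟨lj, hlj, h1⟩ := Submodule.mem_map.mp (hYvS j)
    exact ⟨lj, hlj, h1⟩
  choose l hlL hl1 using hlift
  -- dual functionals
  obtain ⟨S', hS'⟩ := Submodule.exists_isCompl S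
  set P : T →ₗ[ℝ] S := S.projectionOnto S' hS' with hP
  set y : Fin (finrank ℝ S) → (T →ₗ[ℝ] ℝ) := fun j => (b.coord j) ∘ₗ P with hy
  have hdual : ∀ j k, y j (Yv k) = if k = j then 1 else 0 := by
    intro j k
    rw [hy]
    simp only [LinearMap.comp_apply, hYv]
    rw [hP, Submodule.projectionOnto_apply_left hS' (b k)]
    rw [Basis.coord_apply, Basis.repr_self_apply]
  -- isotropy of the lifts
  have hβiso : ∀ j k, ((l j).2).curryLeft (Yv k) + ((l k).2).curryLeft (Yv j) = 0 := by
    intro j k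
    have h0 := hiso (l j) (hlL j) (l k) (hlL k)
    have : pairing (l j) (l k) =
        ((l k).2).curryLeft (Yv j) + ((l j).2).curryLeft (Yv k) := by
      rw [pairing, hl1 j, hl1 k]
    rw [this] at h0
    rw [add_comm]
    exact h0
  obtain ⟨α, hα⟩ := construct Yv y hdual q X (fun j => (l j).2) hβiso
  -- the orthogonal element
  have horth : ((X, α) : EP T q) ∈ orthSet (L : Set (EP T q)) := by
    intro l' hl'
    have hmem : l'.1 ∈ S := ⟨l', hl', rfl⟩
    set r : Fin (finrank ℝ S) → ℝ := fun j => b.repr ⟨l'.1, hmem⟩ j with hr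
    set l'' : EP T q := ∑ j, r j • l j with hl''
    have hl''L : l'' ∈ L := Submodule.sum_mem L fun j _ => Submodule.smul_mem L (r j) (hlL j)
    have hfst : l''.1 = l'.1 := by
      have h1 := congrArg (S.subtype) (b.sum_repr ⟨l'.1, hmem⟩)
      rw [map_sum] at h1
      simp only [map_smul, Submodule.coe_subtype] at h1
      rw [hl'', Prod.fst_sum]
      simp only [Prod.smul_fst]
      calc ∑ j, r j • (l j).1 = ∑ j, r j • Yv j :=
            Finset.sum_congr rfl fun j _ => by rw [hl1 j]
        _ = l'.1 := by simp only [hYv, hr]; exact h1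
    have hsnd : l'.2 = l''.2 := by
      have hd : (l' - l'') ∈ L := Submodule.sub_mem L hl' hl''L
      have he : l' - l'' = (((0:T), l'.2 - l''.2) : EP T q) := by
        refine Prod.ext ?_ rfl
        simp [hfst]
      rw [he] at hd
      have := hker _ hd
      rw [sub_eq_zero] at this
      exact this
    have hsnd2 : l''.2 = ∑ j, r j • (l j).2 := by
      rw [hl'', Prod.snd_sum]
      simp
    show pairing (X, α) l' = 0
    rw [pairing]
    simp only
    rw [hsnd, hsnd2, ← hfst, hl'', Prod.fst_sum]
    simp only [Prod.smul_fst]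
    rw [curry_sum (fun j => r j • (l j).2) X, map_sum]
    rw [← Finset.sum_add_distrib]
    refine Finset.sum_eq_zero fun j _ => ?_
    rw [curry_smulv, map_smul, hl1 j, hα j]
    simp
  -- conclusions
  have hXA_not_L : ((X, α) : EP T q) ∉ (L : Set (EP T q)) := by
    intro hmem
    exact hX ⟨(X, α), hmem, rfl⟩
  have hsub : (L : Set (EP T q)) ⊆ orthSet (L : Set (EP T q)) := by
    intro e he l' hl'
    exact hiso e he l' hl'
  have hss : (L : Set (EP T q)) ⊂ orthSet (L : Set (EP T q)) :=
    (Set.ssubset_iff_of_subset hsub).mpr ⟨(X, α), horth, hXA_not_L⟩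
  refine ⟨?_, hss, hss.ne⟩
  intro hall
  exact hX (hall (X, α) horth)
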